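/- arXiv:1304.2986 — 2 statements merged into one kernel-verified Lean document; each statement's English description precedes it below -/
import Mathlib

section
/- For a finite linear combination f = ∑_{j=1}^{n} θ_j g_j, where g_1,...,g_{k+1} are the monomials 1, x, ..., x^k and g_{k+1+j}(x) = (x - t_j)^k 1{x ≥ t_j} for distinct knots t_1 < ... < t_{n-k-1} in (0,1), the total variation of the k-th weak derivative of f equals k! · ∑_{j=k+2}^{n} |θ_j|. -/
open Nat MeasureTheory

lemma sum_range_two_mul' (n : ℕ) (F : ℕ → ENNReal) :
    ∑ i ∈ Finset.range (2 * n), F i = ∑ j ∈ Finset.range n, (F (2 * j) + F (2 * j + 1)) := by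
  induction n with
  | zero => simp
  | succ n ih =>
    have : 2 * (n + 1) = 2 * n + 1 + 1 := by ring
    rw [this, Finset.sum_range_succ, Finset.sum_range_succ, ih, Finset.sum_range_succ]
    rw [add_assoc]

lemma evar_sub_le {α : Type*} [LinearOrder α] (f g : α → ℝ) (s : Set α) :
    eVariationOn (fun x => f x - g x) s ≤ eVariationOn f s + eVariationOn g s := by
  apply iSup_le
  rintro ⟨n, ⟨u, hu, us⟩⟩
  calc (∑ i ∈ Finset.range n, edist ((fun x => f x - g x) (u (i + 1))) ((fun x => f x - g x) (u i)))
      ≤ ∑ i ∈ Finset.range n,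
          (edist (f (u (i + 1))) (f (u i)) + edist (g (u (i + 1))) (g (u i))) := by
        apply Finset.sum_le_sum
        intro i _
        simpa [sub_eq_add_neg] using
          (edist_add_add_le (f (u (i+1))) (-g (u (i+1))) (f (u i)) (-g (u i)))
    _ = (∑ i ∈ Finset.range n, edist (f (u (i + 1))) (f (u i))) +
        ∑ i ∈ Finset.range n, edist (g (u (i + 1))) (g (u i)) := Finset.sum_add_distrib
    _ ≤ _ := add_le_add (eVariationOn.sum_le (f := f) (n := n) hu us) (eVariationOn.sum_le (f := g) (n := n) hu us)

lemma integral_kernel (k : ℕ) (hk : 1 ≤ k) (c x β : ℝ) :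
    ∫ u in c..x, (k ! : ℝ) * β * ((x - u) ^ (k - 1) / (k - 1)!) = β * (x - c) ^ k := by
  have h1 : ∀ u : ℝ, (k ! : ℝ) * β * ((x - u) ^ (k - 1) / (k - 1)!) =
      ((k ! : ℝ) * β / (k - 1)!) * (x - u) ^ (k - 1) := by intro u; ring
  simp only [h1]
  rw [intervalIntegral.integral_const_mul, intervalIntegral.integral_comp_sub_left
    (fun u => u ^ (k - 1)) x, sub_self, integral_pow]
  have hk1 : k - 1 + 1 = k := by omega
  rw [hk1, zero_pow (by omega : k ≠ 0)]
  have hfac : (k ! : ℝ) = k * (k - 1)! := by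
    rw [← Nat.mul_factorial_pred (by omega)]; push_cast; ring
  have hfne : ((k - 1)! : ℝ) ≠ 0 := by positivity
  rw [hfac]
  have hcast : ((k - 1 : ℕ) : ℝ) + 1 = (k : ℝ) := by
    rw [← Nat.cast_one (R := ℝ), ← Nat.cast_add, hk1]
  rw [hcast]
  have hkne' : (k : ℝ) ≠ 0 := by
    exact_mod_cast Nat.cast_ne_zero.mpr (by omega)
  field_simp
  ring

lemma trunc_eq_indicator (k : ℕ) (c x d : ℝ) : (fun u : ℝ =>
    d * (if c ≤ u then (1:ℝ) else 0) * ((x - u) ^ (k - 1) / (k - 1)!)) =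
    (Set.Ici c).indicator (fun u => d * ((x - u) ^ (k - 1) / (k - 1)!)) := by
  funext u
  by_cases h : c ≤ u <;> simp [Set.indicator, h]

lemma trunc_intervalIntegrable (k : ℕ) (c x d : ℝ) :
    IntervalIntegrable (fun u : ℝ =>
      d * (if c ≤ u then (1:ℝ) else 0) * ((x - u) ^ (k - 1) / (k - 1)!)) volume 0 x := by
  rw [trunc_eq_indicator]
  have hg : Continuous (fun u : ℝ => d * ((x - u) ^ (k - 1) / (k - 1)!)) := by fun_prop
  constructor <;>
    exact ((hg.integrableOn_Ioc).indicator measurableSet_Ici)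

lemma trunc_integral (k : ℕ) (hk : 1 ≤ k) (c x β : ℝ) (hc : 0 < c) (hx : 0 ≤ x) :
    ∫ u in (0:ℝ)..x, (k ! : ℝ) * β * (if c ≤ u then (1:ℝ) else 0) *
      ((x - u) ^ (k - 1) / (k - 1)!) = if c ≤ x then β * (x - c) ^ k else 0 := by
  by_cases hcx : c ≤ x
  · rw [if_pos hcx, trunc_eq_indicator, intervalIntegral.integral_of_le hx,
      setIntegral_indicator measurableSet_Ici]
    have hset : Set.Ioc 0 x ∩ Set.Ici c = Set.Icc c x := by
      ext u
      simp only [Set.mem_inter_iff, Set.mem_Ioc, Set.mem_Ici, Set.mem_Icc]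
      constructor
      · rintro ⟨⟨_, h2⟩, h3⟩; exact ⟨h3, h2⟩
      · rintro ⟨h1, h2⟩; exact ⟨⟨lt_of_lt_of_le hc h1, h2⟩, h1⟩
    rw [hset, integral_Icc_eq_integral_Ioc, ← intervalIntegral.integral_of_le hcx,
      integral_kernel k hk c x β]
  · rw [if_neg hcx, intervalIntegral.integral_of_le hx]
    push_neg at hcx
    apply setIntegral_eq_zero_of_forall_eq_zero
    intro u hu
    rw [if_neg (by linarith [hu.2] : ¬ c ≤ u)]
    ring

/-- For a finite linear combination `f = ∑ a_j x^j + ∑ b_j (x - t_j)^k 1{x ≥ t_j}` of monomials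
of degree at most `k` and truncated power functions with distinct knots `t_1 < ... < t_p` in
`(0,1)`, the `k`-th weak derivative of `f` is the piecewise constant function
`s(x) = k! a_k + k! ∑ b_j 1{x ≥ t_j}` (in the sense that `f` is recovered from `s` by
`k`-fold integration via the Taylor kernel), and its total variation equals `k! ∑_j |b_j|`. -/
theorem stmt12 (k p : ℕ) (hk : 1 ≤ k) (t : Fin p → ℝ) (ht : StrictMono t)
    (ht' : ∀ i, t i ∈ Set.Ioo (0 : ℝ) 1) (a : Fin (k + 1) → ℝ) (b : Fin p → ℝ) :
    let f : ℝ → ℝ := fun x =>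
      (∑ j : Fin (k + 1), a j * x ^ (j : ℕ)) +
        ∑ j : Fin p, b j * (if t j ≤ x then (x - t j) ^ k else 0)
    let s : ℝ → ℝ := fun x =>
      (k ! : ℝ) * a (Fin.last k) + ∑ j : Fin p, (k ! : ℝ) * b j * (if t j ≤ x then 1 else 0)
    (∀ x ∈ Set.Icc (0 : ℝ) 1,
        f x = (∑ j : Fin k, a j.castSucc * x ^ (j : ℕ)) +
          ∫ u in (0 : ℝ)..x, s u * (x - u) ^ (k - 1) / (k - 1)!) ∧
      eVariationOn s (Set.Icc 0 1) = ENNReal.ofReal ((k ! : ℝ) * ∑ j : Fin p, |b j|) := by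
  intro f s
  constructor
  · -- Part 1: integral identity
    intro x hx
    have hx0 : (0:ℝ) ≤ x := hx.1
    have hsplit : ∀ u : ℝ, s u * (x - u) ^ (k - 1) / (k - 1)! =
        (k ! : ℝ) * a (Fin.last k) * ((x - u) ^ (k - 1) / (k - 1)!) +
        ∑ j : Fin p, (k ! : ℝ) * b j * (if t j ≤ u then (1:ℝ) else 0) *
          ((x - u) ^ (k - 1) / (k - 1)!) := by
      intro u
      simp only [s]
      rw [add_mul, Finset.sum_mul, _root_.add_div, Finset.sum_div]
      congr 1
      · ring
      · apply Finset.sum_congr rfl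
        intro j _
        ring
    have hint0 : IntervalIntegrable
        (fun u => (k ! : ℝ) * a (Fin.last k) * ((x - u) ^ (k - 1) / (k - 1)!)) volume 0 x :=
      (Continuous.intervalIntegrable (by fun_prop) 0 x)
    have hintj : ∀ j ∈ Finset.univ, IntervalIntegrable
        (fun u => (k ! : ℝ) * b j * (if t j ≤ u then (1:ℝ) else 0) *
          ((x - u) ^ (k - 1) / (k - 1)!)) volume 0 x :=
      fun j _ => trunc_intervalIntegrable k (t j) x _
    have hI : (∫ u in (0:ℝ)..x, s u * (x - u) ^ (k - 1) / (k - 1)!) =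
        a (Fin.last k) * x ^ k +
          ∑ j : Fin p, (if t j ≤ x then b j * (x - t j) ^ k else 0) := by
      simp only [hsplit]
      have hsum_int : IntervalIntegrable (fun u : ℝ => ∑ j : Fin p,
          (k ! : ℝ) * b j * (if t j ≤ u then (1:ℝ) else 0) * ((x - u) ^ (k - 1) / (k - 1)!))
          volume 0 x := by
        have h1 := IntervalIntegrable.sum (μ := volume) (a := (0:ℝ)) (b := x)
          Finset.univ hintj
        simpa only [Finset.sum_fn] using h1
      rw [intervalIntegral.integral_add hint0 hsum_int,
        intervalIntegral.integral_finset_sum hintj]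
      congr 1
      · simpa using integral_kernel k hk 0 x (a (Fin.last k))
      · apply Finset.sum_congr rfl
        intro j _
        exact trunc_integral k hk (t j) x (b j) (ht' j).1 hx0
    rw [hI]
    simp only [f]
    rw [Fin.sum_univ_castSucc (f := fun j : Fin (k+1) => a j * x ^ (j : ℕ))]
    have : ∀ j : Fin p, b j * (if t j ≤ x then (x - t j) ^ k else 0) =
        (if t j ≤ x then b j * (x - t j) ^ k else 0) := by
      intro j; split <;> ring
    simp only [this, Fin.val_last, Fin.coe_castSucc]
    ring
  · -- Part 2: variation
    set C : ℝ := (k ! : ℝ) * a (Fin.last k) with hC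
    set d : Fin p → ℝ := fun j => (k ! : ℝ) * b j with hd
    have hs : ∀ x : ℝ, s x = C + ∑ j : Fin p, d j * (if t j ≤ x then (1:ℝ) else 0) := by
      intro x; simp only [s, hC, hd]
    have hone : ∀ j : Fin p, (if t j ≤ (1:ℝ) then (1:ℝ) else 0) = 1 :=
      fun j => if_pos (ht' j).2.le
    have hzero : ∀ j : Fin p, (if t j ≤ (0:ℝ) then (1:ℝ) else 0) = 0 :=
      fun j => if_neg (not_le.mpr (ht' j).1)
    have hdsum : (∑ j : Fin p, |d j|) = (k ! : ℝ) * ∑ j : Fin p, |b j| := by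
      rw [Finset.mul_sum]
      apply Finset.sum_congr rfl
      intro j _
      rw [hd, abs_mul, abs_of_nonneg (by positivity : (0:ℝ) ≤ (k ! : ℝ))]
    rw [← hdsum]
    apply le_antisymm
    · -- upper bound
      set g1 : ℝ → ℝ := fun x => C + ∑ j : Fin p, max (d j) 0 * (if t j ≤ x then (1:ℝ) else 0)
        with hg1
      set g2 : ℝ → ℝ := fun x => ∑ j : Fin p, max (-(d j)) 0 * (if t j ≤ x then (1:ℝ) else 0)
        with hg2
      have hsgg : s = fun x => g1 x - g2 x := by
        funext x
        rw [hs x, hg1, hg2]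
        simp only
        rw [add_sub_assoc, ← Finset.sum_sub_distrib]
        congr 1
        apply Finset.sum_congr rfl
        intro j _
        rw [← sub_mul, max_zero_sub_max_neg_zero_eq_self]
      have hchi : ∀ j : Fin p, ∀ x y : ℝ, x ≤ y →
          (if t j ≤ x then (1:ℝ) else 0) ≤ (if t j ≤ y then (1:ℝ) else 0) := by
        intro j x y hxy
        by_cases h1 : t j ≤ x
        · rw [if_pos h1, if_pos (h1.trans hxy)]
        · by_cases h2 : t j ≤ y <;> simp [h1, h2]
      have hmana1 : Monotone g1 := by
        intro x y hxy
        simp only [hg1]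
        apply _root_.add_le_add le_rfl
        apply Finset.sum_le_sum
        intro j _
        exact mul_le_mul_of_nonneg_left (hchi j x y hxy) (le_max_right _ _)
      have hmana2 : Monotone g2 := by
        intro x y hxy
        simp only [hg2]
        apply Finset.sum_le_sum
        intro j _
        exact mul_le_mul_of_nonneg_left (hchi j x y hxy) (le_max_right _ _)
      have hv1 : eVariationOn g1 (Set.Icc 0 1) ≤ ENNReal.ofReal (g1 1 - g1 0) := by
        have := (hmana1.monotoneOn (Set.Icc (0:ℝ) 1)).eVariationOn_le
          (Set.left_mem_Icc.mpr zero_le_one) (Set.right_mem_Icc.mpr zero_le_one)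
        rwa [Set.inter_self] at this
      have hv2 : eVariationOn g2 (Set.Icc 0 1) ≤ ENNReal.ofReal (g2 1 - g2 0) := by
        have := (hmana2.monotoneOn (Set.Icc (0:ℝ) 1)).eVariationOn_le
          (Set.left_mem_Icc.mpr zero_le_one) (Set.right_mem_Icc.mpr zero_le_one)
        rwa [Set.inter_self] at this
      have hval1 : g1 1 - g1 0 = ∑ j : Fin p, max (d j) 0 := by
        simp only [hg1, hone, hzero, mul_one, mul_zero, Finset.sum_const_zero]
        ring
      have hval2 : g2 1 - g2 0 = ∑ j : Fin p, max (-(d j)) 0 := by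
        simp only [hg2, hone, hzero, mul_one, mul_zero, Finset.sum_const_zero]
        ring
      rw [hsgg]
      refine le_trans (evar_sub_le g1 g2 _) (le_trans (add_le_add hv1 hv2) (le_of_eq ?_))
      rw [hval1, hval2,
        ← ENNReal.ofReal_add (Finset.sum_nonneg fun j _ => le_max_right _ _)
          (Finset.sum_nonneg fun j _ => le_max_right _ _),
        ← Finset.sum_add_distrib]
      congr 1
      exact Finset.sum_congr rfl fun j _ => max_zero_add_max_neg_zero_eq_abs_self _
    · -- lower bound
      rcases Nat.eq_zero_or_pos p with hp | hp
      · subst hp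
        simp
      set prev : Fin p → ℝ := fun j => if h : 0 < (j:ℕ) then t ⟨(j:ℕ) - 1, by omega⟩ else 0
        with hprev
      set m : Fin p → ℝ := fun j => (prev j + t j) / 2 with hmd
      have hprevlt : ∀ j, prev j < t j := by
        intro j
        simp only [hprev]
        split_ifs with h
        · apply ht
          rw [Fin.lt_def]
          simp
          omega
        · exact (ht' j).1
      have hprev0 : ∀ j, 0 ≤ prev j := by
        intro j
        simp only [hprev]
        split_ifs with h
        · exact (ht' _).1.le
        · exact le_refl 0
      have hmlt : ∀ j, m j < t j := by
        intro j; simp only [hmd]; linarith [hprevlt j]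
      have hmge : ∀ j, prev j < m j := by
        intro j; simp only [hmd]; linarith [hprevlt j]
      have hm0 : ∀ j, 0 ≤ m j := fun j => (hprev0 j).trans (hmge j).le
      have hchi_m : ∀ i j : Fin p, t i ≤ m j ↔ (i:ℕ) < (j:ℕ) := by
        intro i j
        constructor
        · intro h
          by_contra hc
          push_neg at hc
          have : t j ≤ t i := ht.monotone (by rw [Fin.le_def]; omega)
          linarith [hmlt j]
        · intro h
          have h1 : 0 < (j:ℕ) := by omega
          have h2 : t i ≤ prev j := by
            simp only [hprev]
            rw [dif_pos h1]
            apply ht.monotone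
            rw [Fin.le_def]
            simp
            omega
          linarith [hmge j]
      have hchi_t : ∀ i j : Fin p, t i ≤ t j ↔ (i:ℕ) ≤ (j:ℕ) := by
        intro i j
        rw [ht.le_iff_le, Fin.le_def]
      have hcongr : ∀ x y : ℝ, (∀ i : Fin p, (t i ≤ x ↔ t i ≤ y)) → s x = s y := by
        intro x y h
        rw [hs x, hs y]
        congr 1
        apply Finset.sum_congr rfl
        intro i _
        rw [if_congr (h i) rfl rfl]
      have hjump : ∀ j : Fin p, s (t j) - s (m j) = d j := by
        intro j
        rw [hs, hs]
        have heq : (C + ∑ i : Fin p, d i * (if t i ≤ t j then (1:ℝ) else 0)) -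
            (C + ∑ i : Fin p, d i * (if t i ≤ m j then (1:ℝ) else 0)) =
            ∑ i : Fin p, (d i * (if t i ≤ t j then (1:ℝ) else 0) -
              d i * (if t i ≤ m j then (1:ℝ) else 0)) := by
          rw [Finset.sum_sub_distrib]
          ring
        rw [heq, Finset.sum_eq_single j]
        · rw [if_pos ((hchi_t j j).mpr le_rfl), if_neg (by rw [hchi_m]; omega)]
          ring
        · intro i _ hij
          have hne : (i:ℕ) ≠ (j:ℕ) := fun hc => hij (Fin.ext hc)
          by_cases hij' : (i:ℕ) < (j:ℕ)
          · rw [if_pos ((hchi_t i j).mpr hij'.le), if_pos ((hchi_m i j).mpr hij')]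
            ring
          · rw [if_neg (by rw [hchi_t]; omega), if_neg (by rw [hchi_m]; omega)]
            ring
        · intro hj
          exact absurd (Finset.mem_univ j) hj
      set u : ℕ → ℝ := fun i => if h : i < 2 * p then
          (if i % 2 = 0 then m ⟨i / 2, by omega⟩ else t ⟨i / 2, by omega⟩) else 1 with huu
      have hu2j : ∀ j : ℕ, (hj : j < p) → u (2*j) = m ⟨j, hj⟩ := by
        intro j hj
        simp only [huu]
        rw [dif_pos (by omega), if_pos (by omega)]
        congr 1
        simp only [Fin.mk.injEq]
        omega
      have hu2j1 : ∀ j : ℕ, (hj : j < p) → u (2*j+1) = t ⟨j, hj⟩ := by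
        intro j hj
        simp only [huu]
        rw [dif_pos (by omega), if_neg (by omega)]
        congr 1
        simp only [Fin.mk.injEq]
        omega
      have humono : Monotone u := by
        apply monotone_nat_of_le_succ
        intro i
        by_cases h1 : i < 2*p
        · by_cases he : i % 2 = 0
          · obtain ⟨j, rfl⟩ : ∃ j, i = 2*j := ⟨i/2, by omega⟩
            have hj : j < p := by omega
            rw [hu2j j hj, hu2j1 j hj]
            exact (hmlt _).le
          · obtain ⟨j, rfl⟩ : ∃ j, i = 2*j+1 := ⟨i/2, by omega⟩
            have hj : j < p := by omega
            rw [hu2j1 j hj]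
            by_cases h2 : j + 1 < p
            · rw [show 2*j+1+1 = 2*(j+1) by ring, hu2j (j+1) h2]
              have hpv : prev ⟨j+1, h2⟩ = t ⟨j, hj⟩ := by
                simp only [hprev]
                rw [dif_pos (by simp)]
                congr 1
              have := hmge ⟨j+1, h2⟩
              rw [hpv] at this
              exact this.le
            · have : u (2*j+1+1) = 1 := by
                simp only [huu]
                rw [dif_neg (by omega)]
              rw [this]
              exact (ht' _).2.le
        · have hi1 : ¬ (i + 1 < 2*p) := by omega
          simp only [huu]
          rw [dif_neg h1, dif_neg hi1]
      have hus : ∀ i, u i ∈ Set.Icc (0:ℝ) 1 := by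
        intro i
        simp only [huu]
        split_ifs with h1 h2
        · exact ⟨hm0 _, ((hmlt _).le.trans (ht' _).2.le)⟩
        · exact ⟨(ht' _).1.le, (ht' _).2.le⟩
        · exact ⟨zero_le_one, le_refl 1⟩
      have hsum := eVariationOn.sum_le (f := s) (n := 2*p) humono hus
      rw [sum_range_two_mul'] at hsum
      refine le_trans (le_of_eq ?_) hsum
      set D : ℕ → ENNReal := fun j => if h : j < p then ENNReal.ofReal |d ⟨j, h⟩| else 0 with hD
      have step1 : ENNReal.ofReal (∑ j : Fin p, |d j|) = ∑ j : Fin p, D (j : ℕ) := by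
        rw [ENNReal.ofReal_sum_of_nonneg (fun j _ => abs_nonneg (d j))]
        apply Finset.sum_congr rfl
        intro j _
        rw [hD]
        simp only
        rw [dif_pos j.isLt]
      rw [step1, Fin.sum_univ_eq_sum_range D]
      apply Finset.sum_congr rfl
      intro j hj
      rw [Finset.mem_range] at hj
      rw [hD]
      simp only
      rw [dif_pos hj]
      have hF1 : edist (s (u (2*j+1))) (s (u (2*j))) = ENNReal.ofReal |d ⟨j, hj⟩| := by
        rw [hu2j1 j hj, hu2j j hj, edist_dist, Real.dist_eq, hjump]
      have hF2 : edist (s (u (2*j+1+1))) (s (u (2*j+1))) = 0 := by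
        rw [hu2j1 j hj]
        by_cases h2 : j + 1 < p
        · rw [show 2*j+1+1 = 2*(j+1) by ring, hu2j (j+1) h2]
          rw [hcongr (m ⟨j+1, h2⟩) (t ⟨j, hj⟩) ?_, edist_self]
          intro i
          rw [hchi_m, hchi_t]
          show (i:ℕ) < j + 1 ↔ (i:ℕ) ≤ j
          omega
        · have hu1 : u (2*j+1+1) = 1 := by
            simp only [huu]
            rw [dif_neg (by omega)]
          rw [hu1, hcongr 1 (t ⟨j, hj⟩) ?_, edist_self]
          intro i
          rw [hchi_t]
          show t i ≤ 1 ↔ (i:ℕ) ≤ j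
          constructor
          · intro _
            have := i.isLt
            omega
          · intro _
            exact (ht' i).2.le
      rw [hF1, hF2, add_zero]
end

section
/- The lasso (and generalized lasso) fitted value map is nonexpansive in the response: for fixed X ∈ ℝ^{n×p} and λ ≥ 0, if β̂(y) denotes any minimizer of (1/2)‖y - Xβ‖₂² + λ‖β‖₁, then the fitted value Xβ̂(y) is uniquely determined by y, and ‖Xβ̂(y) - Xβ̂(y')‖₂ ≤ ‖y - y'‖₂ for all y, y' ∈ ℝ^n. -/
open Matrix

private lemma limitAux (a c : ℝ) (hc : 0 ≤ c)
    (h : ∀ t : ℝ, 0 < t → t ≤ 1 → a ≤ t * c) : a ≤ 0 := by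
  by_contra hpos
  push_neg at hpos
  rcases eq_or_lt_of_le hc with hc0 | hc0
  · have := h 1 one_pos le_rfl; rw [← hc0] at this; linarith
  · have ht : (0:ℝ) < min 1 (a / (2 * c)) := by
      apply lt_min one_pos; positivity
    have h1 := h _ ht (min_le_left _ _)
    have h2 : min 1 (a / (2 * c)) * c ≤ (a / (2 * c)) * c :=
      mul_le_mul_of_nonneg_right (min_le_right _ _) hc
    have h3 : (a / (2 * c)) * c = a / 2 := by field_simp
    linarith

private lemma optAux (n p : ℕ) (X : Matrix (Fin n) (Fin p) ℝ) (lam : ℝ) (hlam : 0 ≤ lam)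
    (y : Fin n → ℝ) (β β' : Fin p → ℝ)
    (hopt : ∀ b, (1 / 2) * (∑ i, (y i - (X *ᵥ β) i) ^ 2) + lam * ∑ j, |β j| ≤
      (1 / 2) * (∑ i, (y i - (X *ᵥ b) i) ^ 2) + lam * ∑ j, |b j|) :
    ∑ i, (y i - (X *ᵥ β) i) * ((X *ᵥ β') i - (X *ᵥ β) i) ≤
      lam * ((∑ j, |β' j|) - ∑ j, |β j|) := by
  set δ : Fin n → ℝ := fun i => (X *ᵥ β') i - (X *ᵥ β) i with hδ
  set S : ℝ := ∑ i, (y i - (X *ᵥ β) i) * δ i with hS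
  set D : ℝ := ∑ i, δ i ^ 2 with hD
  set L : ℝ := ∑ j, |β j| with hL
  set L' : ℝ := ∑ j, |β' j| with hL'
  have hkey : ∀ t : ℝ, 0 < t → t ≤ 1 → S - lam * (L' - L) ≤ t * ((1/2) * D) := by
    intro t ht ht1
    set b : Fin p → ℝ := β + t • (β' - β) with hbdef
    have hb : ∀ i, (X *ᵥ b) i = (X *ᵥ β) i + t * δ i := by
      intro i
      rw [hbdef, mulVec_add, mulVec_smul, mulVec_sub]
      simp [hδ]
    have hq : ∑ i, (y i - (X *ᵥ b) i) ^ 2 =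
        (∑ i, (y i - (X *ᵥ β) i) ^ 2) - 2 * t * S + t ^ 2 * D := by
      simp only [hb, hS, hD, Finset.mul_sum]
      rw [← Finset.sum_sub_distrib, ← Finset.sum_add_distrib]
      exact Finset.sum_congr rfl fun i _ => by ring
    have hl1 : ∑ j, |b j| ≤ L + t * (L' - L) := by
      have hpt : ∀ j, |b j| ≤ (1 - t) * |β j| + t * |β' j| := by
        intro j
        have hbj : b j = (1 - t) * β j + t * β' j := by
          simp [hbdef]; ring
        rw [hbj]
        refine (abs_add_le _ _).trans ?_
        rw [abs_mul, abs_mul, abs_of_nonneg (by linarith : (0:ℝ) ≤ 1 - t),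
          abs_of_nonneg ht.le]
      calc ∑ j, |b j| ≤ ∑ j, ((1 - t) * |β j| + t * |β' j|) :=
            Finset.sum_le_sum fun j _ => hpt j
        _ = (1 - t) * L + t * L' := by
            rw [Finset.sum_add_distrib, ← Finset.mul_sum, ← Finset.mul_sum]
        _ = L + t * (L' - L) := by ring
    have hcomb := hopt b
    rw [hq] at hcomb
    have hl1' : lam * (∑ j, |b j|) ≤ lam * (L + t * (L' - L)) :=
      mul_le_mul_of_nonneg_left hl1 hlam
    have htS : t * S ≤ t * ((t/2) * D + lam * (L' - L)) := by nlinarith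
    have := (mul_le_mul_iff_right₀ ht).mp htS
    nlinarith
  have hDnn : (0:ℝ) ≤ (1/2) * D := by
    have : (0:ℝ) ≤ D := Finset.sum_nonneg fun i _ => sq_nonneg _
    linarith
  linarith [limitAux (S - lam * (L' - L)) ((1/2) * D) hDnn hkey]

/-- The lasso fitted value map is uniquely determined and nonexpansive in the response: for
fixed `X` and `λ ≥ 0`, any two minimizers of the lasso criterion (for the same `y`) have the
same fitted value `Xβ̂`, and the map `y ↦ Xβ̂(y)` is 1-Lipschitz in the Euclidean norm. -/
theorem stmt17 (n p : ℕ) (X : Matrix (Fin n) (Fin p) ℝ) (lam : ℝ) (hlam : 0 ≤ lam) :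
    let F : (Fin n → ℝ) → (Fin p → ℝ) → ℝ := fun y β =>
      (1 / 2) * (∑ i, (y i - (X *ᵥ β) i) ^ 2) + lam * ∑ j, |β j|
    (∀ (y : Fin n → ℝ) (β₁ β₂ : Fin p → ℝ),
        (∀ β, F y β₁ ≤ F y β) → (∀ β, F y β₂ ≤ F y β) → X *ᵥ β₁ = X *ᵥ β₂) ∧
      (∀ (y y' : Fin n → ℝ) (β β' : Fin p → ℝ),
        (∀ b, F y β ≤ F y b) → (∀ b, F y' β' ≤ F y' b) →
          Real.sqrt (∑ i, ((X *ᵥ β) i - (X *ᵥ β') i) ^ 2) ≤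
            Real.sqrt (∑ i, (y i - y' i) ^ 2)) := by
  intro F
  -- central inequality: ∑ u² ≤ ∑ (y - y') * u where u = Xβ - Xβ'
  have hcentral : ∀ (y y' : Fin n → ℝ) (β β' : Fin p → ℝ),
      (∀ b, F y β ≤ F y b) → (∀ b, F y' β' ≤ F y' b) →
      ∑ i, ((X *ᵥ β) i - (X *ᵥ β') i) ^ 2 ≤
        ∑ i, (y i - y' i) * ((X *ᵥ β) i - (X *ᵥ β') i) := by
    intro y y' β β' h1 h2
    have o1 := optAux n p X lam hlam y β β' h1
    have o2 := optAux n p X lam hlam y' β' β h2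
    have hadd := add_le_add o1 o2
    rw [← Finset.sum_add_distrib] at hadd
    have hrw : ∀ i, (y i - (X *ᵥ β) i) * ((X *ᵥ β') i - (X *ᵥ β) i) +
        (y' i - (X *ᵥ β') i) * ((X *ᵥ β) i - (X *ᵥ β') i) =
        ((X *ᵥ β) i - (X *ᵥ β') i) ^ 2 - (y i - y' i) * ((X *ᵥ β) i - (X *ᵥ β') i) := by
      intro i; ring
    rw [Finset.sum_congr rfl fun i _ => hrw i, Finset.sum_sub_distrib] at hadd
    linarith
  constructor
  · intro y β₁ β₂ h1 h2
    have := hcentral y y β₁ β₂ h1 h2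
    simp only [sub_self, zero_mul, Finset.sum_const_zero] at this
    have hz : ∑ i, ((X *ᵥ β₁) i - (X *ᵥ β₂) i) ^ 2 = 0 :=
      le_antisymm this (Finset.sum_nonneg fun i _ => sq_nonneg _)
    funext i
    have := (Finset.sum_eq_zero_iff_of_nonneg fun i _ => sq_nonneg _).mp hz i
      (Finset.mem_univ i)
    have := pow_eq_zero_iff two_ne_zero |>.mp this
    linarith
  · intro y y' β β' h1 h2
    have hc := hcentral y y' β β' h1 h2
    set U : ℝ := ∑ i, ((X *ᵥ β) i - (X *ᵥ β') i) ^ 2 with hU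
    set D2 : ℝ := ∑ i, (y i - y' i) ^ 2 with hD2
    have hUnn : (0:ℝ) ≤ U := Finset.sum_nonneg fun i _ => sq_nonneg _
    have hD2nn : (0:ℝ) ≤ D2 := Finset.sum_nonneg fun i _ => sq_nonneg _
    have hcs : (∑ i, (y i - y' i) * ((X *ᵥ β) i - (X *ᵥ β') i)) ^ 2 ≤ D2 * U :=
      Finset.sum_mul_sq_le_sq_mul_sq Finset.univ _ _
    have hle : U ≤ D2 := by nlinarith
    exact Real.sqrt_le_sqrt hle
end
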